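/- There is no function u : ℝ² → ℝ which is twice continuously differentiable on a neighborhood of the origin and satisfies all of the following: (i) ∂ₓu(0,0) = ∂ᵧu(0,0) = 0; (ii) ∂ₓₓu(0,0) + ∂ᵧᵧu(0,0) ≤ 0; (iii) for every vector (v₁,v₂) with v₁ > 0 and v₂ < 0, the Hessian of u at the origin is positive on it: ∂ₓₓu(0,0)·v₁² + 2·∂ₓ∂ᵧu(0,0)·v₁·v₂ + ∂ᵧᵧu(0,0)·v₂² > 0; (iv) there exist h : ℝ → ℝ differentiable near 0 with h(0) = 0 and h'(0) = 0, and η₁, η₂ : ℝ² → ℝ with x ↦ η₁(x,h(x)) and x ↦ η₂(x,h(x)) differentiable at 0, η₁(0,0) = 0, η₂(0,0) = 1, such that η₁(x,h(x))·∂ₓu(x,h(x)) + η₂(x,h(x))·∂ᵧu(x,h(x)) = u(x,h(x)) for all x in a neighborhood of 0. -/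

import Mathlib

/-- Analytic core of the maximum principle at a corner (Theorem A.1): there is no
`C²` function `u` near the origin with vanishing gradient at the origin, satisfying
the mean curvature inequality `u_xx + u_yy ≤ 0` at the origin, whose Hessian at the
origin is positive on all vectors `(v₁, v₂)` with `v₁ > 0`, `v₂ < 0`, and which
satisfies the orthogonality identity `η₁ u_x + η₂ u_y = u` along a curve
`x ↦ (x, h(x))` tangent to the x-axis at the origin. -/
theorem stmt_4 :
    ¬ ∃ u : ℝ × ℝ → ℝ,
      ContDiffAt ℝ 2 u (0, 0) ∧
      fderiv ℝ u (0, 0) (1, 0) = 0 ∧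
      fderiv ℝ u (0, 0) (0, 1) = 0 ∧
      fderiv ℝ (fun p => fderiv ℝ u p (1, 0)) (0, 0) (1, 0)
        + fderiv ℝ (fun p => fderiv ℝ u p (0, 1)) (0, 0) (0, 1) ≤ 0 ∧
      (∀ v₁ v₂ : ℝ, 0 < v₁ → v₂ < 0 →
        fderiv ℝ (fun p => fderiv ℝ u p (1, 0)) (0, 0) (1, 0) * v₁ ^ 2
          + 2 * fderiv ℝ (fun p => fderiv ℝ u p (0, 1)) (0, 0) (1, 0) * v₁ * v₂
          + fderiv ℝ (fun p => fderiv ℝ u p (0, 1)) (0, 0) (0, 1) * v₂ ^ 2 > 0) ∧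
      (∃ h : ℝ → ℝ, ∃ η₁ η₂ : ℝ × ℝ → ℝ,
        (∀ᶠ x in nhds (0 : ℝ), DifferentiableAt ℝ h x) ∧
        h 0 = 0 ∧ deriv h 0 = 0 ∧
        DifferentiableAt ℝ (fun x => η₁ (x, h x)) 0 ∧
        DifferentiableAt ℝ (fun x => η₂ (x, h x)) 0 ∧
        η₁ (0, 0) = 0 ∧ η₂ (0, 0) = 1 ∧
        ∀ᶠ x in nhds (0 : ℝ),
          η₁ (x, h x) * fderiv ℝ u (x, h x) (1, 0)
            + η₂ (x, h x) * fderiv ℝ u (x, h x) (0, 1) = u (x, h x)) := by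
  rintro ⟨u, hu, hux, huy, hAC, hpos, h, η₁, η₂, hh, h0, hh', hη₁d, hη₂d, hη₁0, hη₂0, hid⟩
  set A := fderiv ℝ (fun p => fderiv ℝ u p (1, 0)) (0, 0) (1, 0) with hA
  set B := fderiv ℝ (fun p => fderiv ℝ u p (0, 1)) (0, 0) (1, 0) with hB
  set C := fderiv ℝ (fun p => fderiv ℝ u p (0, 1)) (0, 0) (0, 1) with hC
  have hfd : DifferentiableAt ℝ (fderiv ℝ u) ((0:ℝ),(0:ℝ)) := by
    have := hu.fderiv_right (m := 1) (by norm_num)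
    exact this.differentiableAt one_ne_zero
  have hg₁ : DifferentiableAt ℝ (fun p => fderiv ℝ u p ((1:ℝ), (0:ℝ))) ((0:ℝ),(0:ℝ)) :=
    hfd.clm_apply (differentiableAt_const _)
  have hg₂ : DifferentiableAt ℝ (fun p => fderiv ℝ u p ((0:ℝ), (1:ℝ))) ((0:ℝ),(0:ℝ)) :=
    hfd.clm_apply (differentiableAt_const _)
  have hhd : DifferentiableAt ℝ h 0 := hh.self_of_nhds
  have hγ : HasDerivAt (fun x : ℝ => (x, h x)) ((1:ℝ), (0:ℝ)) 0 := by
    have := (hasDerivAt_id (0:ℝ)).prodMk (hhd.hasDerivAt)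
    rwa [hh'] at this
  have hγ0 : ((0:ℝ), h 0) = ((0:ℝ), (0:ℝ)) := by rw [h0]
  -- derivative of x ↦ fderiv u (x, h x) (1,0)
  have hG₁ : HasDerivAt (fun x : ℝ => fderiv ℝ u (x, h x) ((1:ℝ),(0:ℝ))) A 0 := by
    have hc : HasFDerivAt (fun p => fderiv ℝ u p ((1:ℝ),(0:ℝ)))
        (fderiv ℝ (fun p => fderiv ℝ u p ((1:ℝ),(0:ℝ))) ((0:ℝ),(0:ℝ))) ((0:ℝ), h 0) := by
      rw [hγ0]; exact hg₁.hasFDerivAt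
    exact hc.comp_hasDerivAt 0 hγ
  have hG₂ : HasDerivAt (fun x : ℝ => fderiv ℝ u (x, h x) ((0:ℝ),(1:ℝ))) B 0 := by
    have hc : HasFDerivAt (fun p => fderiv ℝ u p ((0:ℝ),(1:ℝ)))
        (fderiv ℝ (fun p => fderiv ℝ u p ((0:ℝ),(1:ℝ))) ((0:ℝ),(0:ℝ))) ((0:ℝ), h 0) := by
      rw [hγ0]; exact hg₂.hasFDerivAt
    exact hc.comp_hasDerivAt 0 hγ
  have hud : DifferentiableAt ℝ u ((0:ℝ),(0:ℝ)) := hu.differentiableAt (by norm_num)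
  have hU : HasDerivAt (fun x : ℝ => u (x, h x)) 0 0 := by
    have hc : HasFDerivAt u (fderiv ℝ u ((0:ℝ),(0:ℝ))) ((0:ℝ), h 0) := by
      rw [hγ0]; exact hud.hasFDerivAt
    have := hc.comp_hasDerivAt 0 hγ
    rwa [hux] at this
  have he₁ : HasDerivAt (fun x => η₁ (x, h x)) (deriv (fun x => η₁ (x, h x)) 0) 0 :=
    hη₁d.hasDerivAt
  have he₂ : HasDerivAt (fun x => η₂ (x, h x)) (deriv (fun x => η₂ (x, h x)) 0) 0 :=
    hη₂d.hasDerivAt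
  -- values at 0
  have hv₁ : η₁ ((0:ℝ), h 0) = 0 := by rw [hγ0]; exact hη₁0
  have hv₂ : η₂ ((0:ℝ), h 0) = 1 := by rw [hγ0]; exact hη₂0
  have hG₁0 : fderiv ℝ u ((0:ℝ), h 0) ((1:ℝ),(0:ℝ)) = 0 := by rw [hγ0]; exact hux
  have hG₂0 : fderiv ℝ u ((0:ℝ), h 0) ((0:ℝ),(1:ℝ)) = 0 := by rw [hγ0]; exact huy
  -- derivative of the left-hand side of the identity
  have hF : HasDerivAt (fun x => η₁ (x, h x) * fderiv ℝ u (x, h x) ((1:ℝ),(0:ℝ))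
      + η₂ (x, h x) * fderiv ℝ u (x, h x) ((0:ℝ),(1:ℝ))) B 0 := by
    have := ((he₁.mul hG₁).add (he₂.mul hG₂))
    simp only [hv₁, hv₂, hG₁0, hG₂0] at this
    refine this.congr_deriv ?_
    ring
  have hB0 : B = 0 := by
    have hde : deriv (fun x => η₁ (x, h x) * fderiv ℝ u (x, h x) ((1:ℝ),(0:ℝ))
        + η₂ (x, h x) * fderiv ℝ u (x, h x) ((0:ℝ),(1:ℝ))) 0
        = deriv (fun x => u (x, h x)) 0 := Filter.EventuallyEq.deriv_eq hid
    rw [hF.deriv, hU.deriv] at hde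
    exact hde
  have := hpos 1 (-1) one_pos (by norm_num)
  rw [hB0] at this
  nlinarith [this, hAC]
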